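/- arXiv:2603.14070 — 4 statements merged into one kernel-verified Lean document; each statement's English description precedes it below -/
import Mathlib

section
/- For joint distributions P_ij(x,y) = p_i(x)q_j(y|x) and P_i'j'(x,y) = p_{i'}(x)q_{j'}(y|x) on a finite product space, the total variation distance satisfies the lower bound d_TV(P_ij, P_i'j') ≥ max over k ∈ {i, i'} of |Σ_x p_k(x) d_TV(q_j(·|x), q_{j'}(·|x)) − d_TV(p_i, p_{i'})|. -/
open Finset

private lemma tv_tri {X Y : Type} [Fintype X] [Fintype Y] (f g h : X → Y → ℝ) :
    (1/2) * ∑ x, ∑ y, |f x y - h x y| ≤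
      (1/2) * ∑ x, ∑ y, |f x y - g x y| + (1/2) * ∑ x, ∑ y, |g x y - h x y| := by
  rw [← mul_add, ← Finset.sum_add_distrib]
  gcongr with x _
  rw [← Finset.sum_add_distrib]
  gcongr with y _
  exact abs_sub_le (f x y) (g x y) (h x y)

private lemma cov_eq {X Y : Type} [Fintype X] [Fintype Y]
    (p : X → ℝ) (q q' : X → Y → ℝ) (hp : ∀ x, 0 ≤ p x) :
    (1/2) * ∑ x, ∑ y, |p x * q x y - p x * q' x y|
      = ∑ x, p x * ((1/2) * ∑ y, |q x y - q' x y|) := by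
  rw [Finset.mul_sum]
  congr 1; ext x
  rw [Finset.mul_sum, Finset.mul_sum, Finset.mul_sum]
  congr 1; ext y
  rw [← mul_sub, abs_mul, abs_of_nonneg (hp x)]
  ring

private lemma lab_eq {X Y : Type} [Fintype X] [Fintype Y]
    (p p' : X → ℝ) (q : X → Y → ℝ) (hq0 : ∀ x y, 0 ≤ q x y) (hq1 : ∀ x, ∑ y, q x y = 1) :
    (1/2) * ∑ x, ∑ y, |p x * q x y - p' x * q x y|
      = (1/2) * ∑ x, |p x - p' x| := by
  congr 1
  apply Finset.sum_congr rfl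
  intro x _
  have : ∀ y, |p x * q x y - p' x * q x y| = |p x - p' x| * q x y := by
    intro y
    rw [← sub_mul, abs_mul, abs_of_nonneg (hq0 x y)]
  simp_rw [this, ← Finset.mul_sum, hq1 x, mul_one]

/-- General distance bound (lower): the TV distance between two joints is at least the
maximum (over the two marginals) of the absolute difference between the expected
conditional disagreement and the marginal TV distance. -/
theorem general_distance_lower_bound
    {X Y : Type} [Fintype X] [Fintype Y]
    (pi pi' : X → ℝ) (qj qj' : X → Y → ℝ)
    (hpi0 : ∀ x, 0 ≤ pi x) (hpi1 : ∑ x, pi x = 1)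
    (hpi'0 : ∀ x, 0 ≤ pi' x) (hpi'1 : ∑ x, pi' x = 1)
    (hqj0 : ∀ x y, 0 ≤ qj x y) (hqj1 : ∀ x, ∑ y, qj x y = 1)
    (hqj'0 : ∀ x y, 0 ≤ qj' x y) (hqj'1 : ∀ x, ∑ y, qj' x y = 1) :
    max (abs ((∑ x, pi x * ((1/2) * ∑ y, |qj x y - qj' x y|))
            - (1/2) * ∑ x, |pi x - pi' x|))
        (abs ((∑ x, pi' x * ((1/2) * ∑ y, |qj x y - qj' x y|))
            - (1/2) * ∑ x, |pi x - pi' x|))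
      ≤ (1/2) * ∑ x, ∑ y, |pi x * qj x y - pi' x * qj' x y| := by
  set f : X → Y → ℝ := fun x y => pi x * qj x y
  set g : X → Y → ℝ := fun x y => pi x * qj' x y
  set g' : X → Y → ℝ := fun x y => pi' x * qj x y
  set h : X → Y → ℝ := fun x y => pi' x * qj' x y
  have hA : (1/2) * ∑ x, ∑ y, |f x y - g x y|
      = ∑ x, pi x * ((1/2) * ∑ y, |qj x y - qj' x y|) := cov_eq pi qj qj' hpi0
  have hA' : (1/2) * ∑ x, ∑ y, |g' x y - h x y|
      = ∑ x, pi' x * ((1/2) * ∑ y, |qj x y - qj' x y|) := cov_eq pi' qj qj' hpi'0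
  have hB : (1/2) * ∑ x, ∑ y, |g x y - h x y|
      = (1/2) * ∑ x, |pi x - pi' x| := lab_eq pi pi' qj' hqj'0 hqj'1
  have hB' : (1/2) * ∑ x, ∑ y, |f x y - g' x y|
      = (1/2) * ∑ x, |pi x - pi' x| := lab_eq pi pi' qj hqj0 hqj1
  have sym : ∀ (a b : X → Y → ℝ), (1/2 : ℝ) * ∑ x, ∑ y, |a x y - b x y|
      = (1/2) * ∑ x, ∑ y, |b x y - a x y| := by
    intro a b
    congr 1
    apply Finset.sum_congr rfl; intro x _
    apply Finset.sum_congr rfl; intro y _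
    exact abs_sub_comm _ _
  have t1 := tv_tri f g h
  have t2 := tv_tri g f h
  have t3 := tv_tri f g' h
  have t4 := tv_tri g' f h
  rw [hA, hB] at t1
  rw [sym g f, hA, hB] at t2
  rw [hB', hA'] at t3
  rw [sym g' f, hB', hA'] at t4
  have t5 := tv_tri f h g
  have t6 := tv_tri f h g'
  rw [sym h g, hB, hA] at t5
  rw [sym h g', hA', hB'] at t6
  have hD : (1/2 : ℝ) * ∑ x, ∑ y, |f x y - h x y|
      = (1/2) * ∑ x, ∑ y, |pi x * qj x y - pi' x * qj' x y| := rfl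
  rw [max_le_iff]
  constructor <;> rw [abs_sub_le_iff] <;> constructor <;> linarith
end

section
/- For joint distributions P(x,y) = p(x)q(y|x) and P'(x,y) = p'(x)q'(y|x) on a finite product space, with overlap m(x) = min(p(x), p'(x)), the total variation distance satisfies d_TV(P, P') ≤ d_TV(p, p') + Σ_x m(x) · d_TV(q(·|x), q'(·|x)). In particular, if the pointwise conditional disagreement is bounded by η̄ (i.e., d_TV(q(·|x), q'(·|x)) ≤ η̄ for all x), then d_TV(P, P') ≤ d_TV(p, p') + (1 − d_TV(p, p')) · η̄. -/
open Finset

private lemma key_le {Y : Type} [Fintype Y] (a b : ℝ) (f g : Y → ℝ)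
    (hb : 0 ≤ b) (hf : ∀ y, 0 ≤ f y) (hf1 : ∑ y, f y = 1) (hab : b ≤ a) :
    ∑ y, |a * f y - b * g y| ≤ (a - b) + b * ∑ y, |f y - g y| := by
  have h : ∀ y, |a * f y - b * g y| ≤ (a - b) * f y + b * |f y - g y| := by
    intro y
    have he : a * f y - b * g y = (a - b) * f y + b * (f y - g y) := by ring
    rw [he]
    refine (abs_add_le _ _).trans ?_
    rw [abs_mul, abs_mul, abs_of_nonneg (by linarith : (0:ℝ) ≤ a - b),
      abs_of_nonneg hb, abs_of_nonneg (hf y)]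
  calc ∑ y, |a * f y - b * g y| ≤ ∑ y, ((a - b) * f y + b * |f y - g y|) :=
        Finset.sum_le_sum (fun y _ => h y)
    _ = (a - b) + b * ∑ y, |f y - g y| := by
        rw [Finset.sum_add_distrib, ← Finset.mul_sum, ← Finset.mul_sum, hf1, mul_one]

private lemma key {Y : Type} [Fintype Y] (a b : ℝ) (f g : Y → ℝ)
    (ha : 0 ≤ a) (hb : 0 ≤ b)
    (hf : ∀ y, 0 ≤ f y) (hf1 : ∑ y, f y = 1)
    (hg : ∀ y, 0 ≤ g y) (hg1 : ∑ y, g y = 1) :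
    ∑ y, |a * f y - b * g y| ≤ |a - b| + min a b * ∑ y, |f y - g y| := by
  rcases le_total b a with hab | hab
  · have := key_le a b f g hb hf hf1 hab
    rw [abs_of_nonneg (by linarith : (0:ℝ) ≤ a - b), min_eq_right hab]
    exact this
  · have := key_le b a g f ha hg hg1 hab
    rw [abs_of_nonpos (by linarith : a - b ≤ 0), min_eq_left hab]
    calc ∑ y, |a * f y - b * g y| = ∑ y, |b * g y - a * f y| := by
          simp [abs_sub_comm]
      _ ≤ (b - a) + a * ∑ y, |g y - f y| := this
      _ = -(a - b) + a * ∑ y, |f y - g y| := by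
          have : ∀ y, |g y - f y| = |f y - g y| := fun y => abs_sub_comm _ _
          simp only [this]; ring

/-- Overlap (gating) bound: the joint TV distance is at most the marginal TV distance
plus the conditional disagreement averaged over the overlap mass; in particular, under
a uniform bound η̄ on pointwise conditional disagreement, it is at most
d_TV(p,p') + (1 − d_TV(p,p'))·η̄. -/
theorem overlap_gating_bound
    {X Y : Type} [Fintype X] [Fintype Y]
    (p p' : X → ℝ) (q q' : X → Y → ℝ) (ηbar : ℝ)
    (hp0 : ∀ x, 0 ≤ p x) (hp1 : ∑ x, p x = 1)
    (hp'0 : ∀ x, 0 ≤ p' x) (hp'1 : ∑ x, p' x = 1)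
    (hq0 : ∀ x y, 0 ≤ q x y) (hq1 : ∀ x, ∑ y, q x y = 1)
    (hq'0 : ∀ x y, 0 ≤ q' x y) (hq'1 : ∀ x, ∑ y, q' x y = 1) :
    ((1/2) * ∑ x, ∑ y, |p x * q x y - p' x * q' x y|
        ≤ (1/2) * ∑ x, |p x - p' x|
          + ∑ x, min (p x) (p' x) * ((1/2) * ∑ y, |q x y - q' x y|))
    ∧ ((∀ x, (1/2) * ∑ y, |q x y - q' x y| ≤ ηbar) →
        (1/2) * ∑ x, ∑ y, |p x * q x y - p' x * q' x y|
          ≤ (1/2) * ∑ x, |p x - p' x|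
            + (1 - (1/2) * ∑ x, |p x - p' x|) * ηbar) := by
  have hmain : (1/2) * ∑ x, ∑ y, |p x * q x y - p' x * q' x y|
      ≤ (1/2) * ∑ x, |p x - p' x|
        + ∑ x, min (p x) (p' x) * ((1/2) * ∑ y, |q x y - q' x y|) := by
    have hpt : ∀ x, ∑ y, |p x * q x y - p' x * q' x y|
        ≤ |p x - p' x| + min (p x) (p' x) * ∑ y, |q x y - q' x y| := fun x =>
      key (p x) (p' x) (q x) (q' x) (hp0 x) (hp'0 x) (hq0 x) (hq1 x) (hq'0 x) (hq'1 x)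
    have := Finset.sum_le_sum (fun x (_ : x ∈ Finset.univ) => hpt x)
    rw [Finset.sum_add_distrib] at this
    have h2 : ∑ x, min (p x) (p' x) * ((1/2) * ∑ y, |q x y - q' x y|)
        = (1/2) * ∑ x, min (p x) (p' x) * ∑ y, |q x y - q' x y| := by
      rw [Finset.mul_sum]; congr 1; ext x; ring
    rw [h2]; nlinarith [this]
  refine ⟨hmain, fun hbound => ?_⟩
  have hmin : ∑ x, min (p x) (p' x) = 1 - (1/2) * ∑ x, |p x - p' x| := by
    have hminx : ∀ a b : ℝ, min a b = (a + b - |a - b|) / 2 := by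
      intro a b
      rcases le_total a b with h | h
      · rw [min_eq_left h, abs_of_nonpos (by linarith)]; ring
      · rw [min_eq_right h, abs_of_nonneg (by linarith)]; ring
    calc ∑ x, min (p x) (p' x) = ∑ x, (p x + p' x - |p x - p' x|) / 2 := by
          apply Finset.sum_congr rfl; intro x _; rw [hminx]
      _ = (∑ x, p x + ∑ x, p' x - ∑ x, |p x - p' x|) / 2 := by
          rw [← Finset.sum_div, Finset.sum_sub_distrib, Finset.sum_add_distrib]
      _ = 1 - (1/2) * ∑ x, |p x - p' x| := by rw [hp1, hp'1]; ring
  have hmin0 : ∀ x, 0 ≤ min (p x) (p' x) := fun x => le_min (hp0 x) (hp'0 x)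
  have hstep : ∑ x, min (p x) (p' x) * ((1/2) * ∑ y, |q x y - q' x y|)
      ≤ ∑ x, min (p x) (p' x) * ηbar := by
    apply Finset.sum_le_sum
    intro x _
    exact mul_le_mul_of_nonneg_left (hbound x) (hmin0 x)
  rw [← Finset.sum_mul, hmin] at hstep
  linarith [hmain]
end

section
/- Let P be the convex hull of the finite family of joint distributions {P_ij} where P_ij(x,y) = p_i(x)q_j(y|x), for i in a finite index set I and j in a finite index set J. Then the TV diameter of P satisfies max(η_X, η*_{Y|X}) ≤ diam_TV(P), where η_X = max_{i,i'} d_TV(p_i, p_{i'}) and η*_{Y|X} = max_i max_{j,j'} Σ_x p_i(x) d_TV(q_j(·|x), q_{j'}(·|x)). -/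
open Finset

/-- Diameter lower bound: the TV diameter of the structured credal set is at least the
maximum of the covariate diameter η_X and the maximal expected label disagreement η*_{Y|X}. -/
theorem diameter_lower_bound
    {X Y I J : Type} [Fintype X] [Fintype Y] [Fintype I] [Fintype J]
    [Nonempty I] [Nonempty J]
    (p : I → X → ℝ) (q : J → X → Y → ℝ)
    (hp0 : ∀ i x, 0 ≤ p i x) (hp1 : ∀ i, ∑ x, p i x = 1)
    (hq0 : ∀ j x y, 0 ≤ q j x y) (hq1 : ∀ j x, ∑ y, q j x y = 1) :
    let P : I → J → X × Y → ℝ := fun i j z => p i z.1 * q j z.1 z.2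
    let C : Set (X × Y → ℝ) :=
      {μ | ∃ w : I → J → ℝ, (∀ i j, 0 ≤ w i j) ∧ (∑ i, ∑ j, w i j = 1) ∧
            μ = fun z => ∑ i, ∑ j, w i j * P i j z}
    max (⨆ i, ⨆ i', (1/2) * ∑ x, |p i x - p i' x|)
        (⨆ i, ⨆ j, ⨆ j', ∑ x, p i x * ((1/2) * ∑ y, |q j x y - q j' x y|))
      ≤ sSup {d | ∃ μ ∈ C, ∃ ν ∈ C, (1/2) * ∑ z, |μ z - ν z| = d} := by
  intro P C
  classical
  have hPsum : ∀ i j, ∑ z, P i j z = 1 := by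
    intro i j
    rw [Fintype.sum_prod_type]
    simp only [P]
    calc ∑ x, ∑ y, p i x * q j x y = ∑ x, p i x * ∑ y, q j x y := by
            simp [Finset.mul_sum]
      _ = ∑ x, p i x := by simp [hq1]
      _ = 1 := hp1 i
  have hmem : ∀ i j, P i j ∈ C := by
    intro i j
    refine ⟨fun i' j' => if i' = i then (if j' = j then 1 else 0) else 0, ?_, ?_, ?_⟩
    · intro i' j'; dsimp only; split <;> [skip; norm_num]; split <;> norm_num
    · simp
    · funext z
      rw [Finset.sum_eq_single i]
      · rw [Finset.sum_eq_single j] <;> simp +contextual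
      · intro b _ hb; simp [hb]
      · simp
  -- properties of members
  have hCprop : ∀ μ ∈ C, (∀ z, 0 ≤ μ z) ∧ ∑ z, μ z = 1 := by
    rintro μ ⟨w, hw0, hw1, rfl⟩
    constructor
    · intro z
      refine Finset.sum_nonneg fun i _ => Finset.sum_nonneg fun j _ => ?_
      exact mul_nonneg (hw0 i j) (mul_nonneg (hp0 i z.1) (hq0 j z.1 z.2))
    · rw [Finset.sum_comm]
      calc ∑ i, ∑ z : X × Y, ∑ j, w i j * P i j z
          = ∑ i, ∑ j, ∑ z : X × Y, w i j * P i j z := by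
            refine Finset.sum_congr rfl fun i _ => ?_
            rw [Finset.sum_comm]
        _ = ∑ i, ∑ j, w i j := by
            refine Finset.sum_congr rfl fun i _ => Finset.sum_congr rfl fun j _ => ?_
            rw [← Finset.mul_sum, hPsum, mul_one]
        _ = 1 := hw1
  have hbdd : BddAbove {d | ∃ μ ∈ C, ∃ ν ∈ C, (1/2) * ∑ z, |μ z - ν z| = d} := by
    refine ⟨1, ?_⟩
    rintro d ⟨μ, hμ, ν, hν, rfl⟩
    obtain ⟨hμ0, hμ1⟩ := hCprop μ hμ
    obtain ⟨hν0, hν1⟩ := hCprop ν hν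
    have : ∑ z, |μ z - ν z| ≤ 2 := by
      calc ∑ z, |μ z - ν z| ≤ ∑ z, (μ z + ν z) := by
            refine Finset.sum_le_sum fun z _ => ?_
            calc |μ z - ν z| ≤ |μ z| + |ν z| := abs_sub _ _
              _ = μ z + ν z := by rw [abs_of_nonneg (hμ0 z), abs_of_nonneg (hν0 z)]
        _ = 2 := by rw [Finset.sum_add_distrib, hμ1, hν1]; norm_num
    linarith
  have hle : ∀ i j i' j', (1/2) * ∑ z, |P i j z - P i' j' z| ≤
      sSup {d | ∃ μ ∈ C, ∃ ν ∈ C, (1/2) * ∑ z, |μ z - ν z| = d} := by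
    intro i j i' j'
    exact le_csSup hbdd ⟨P i j, hmem i j, P i' j', hmem i' j', rfl⟩
  apply max_le
  · refine ciSup_le fun i => ciSup_le fun i' => ?_
    have j : J := Classical.arbitrary J
    have key : (1/2 : ℝ) * ∑ x, |p i x - p i' x| = (1/2) * ∑ z, |P i j z - P i' j z| := by
      rw [Fintype.sum_prod_type]
      congr 1
      refine Finset.sum_congr rfl fun x _ => ?_
      calc |p i x - p i' x|
          = |p i x - p i' x| * ∑ y, q j x y := by rw [hq1, mul_one]
        _ = ∑ y, |p i x - p i' x| * q j x y := by rw [Finset.mul_sum]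
        _ = ∑ y, |p i x * q j x y - p i' x * q j x y| := by
            refine Finset.sum_congr rfl fun y _ => ?_
            rw [← sub_mul, abs_mul, abs_of_nonneg (hq0 j x y)]
    rw [key]; exact hle i j i' j
  · refine ciSup_le fun i => ciSup_le fun j => ciSup_le fun j' => ?_
    have key : ∑ x, p i x * ((1/2) * ∑ y, |q j x y - q j' x y|) =
        (1/2) * ∑ z, |P i j z - P i j' z| := by
      rw [Fintype.sum_prod_type, Finset.mul_sum]
      refine Finset.sum_congr rfl fun x _ => ?_
      have hy : ∀ y, |P i j (x, y) - P i j' (x, y)| = p i x * |q j x y - q j' x y| := by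
        intro y
        simp only [P]
        rw [← mul_sub, abs_mul, abs_of_nonneg (hp0 i x)]
      simp only [hy, ← Finset.mul_sum]
      ring
    rw [key]; exact hle i j i j'
end

section
/- Let P be the convex hull of the finite family {P_ij} with P_ij(x,y) = p_i(x)q_j(y|x). Then diam_TV(P) ≤ η_X + min(η*_{Y|X}, (1 − η_X)·η̄_{Y|X}), where η_X = max_{i,i'} d_TV(p_i, p_{i'}), η*_{Y|X} = max_i max_{j,j'} Σ_x p_i(x) d_TV(q_j(·|x), q_{j'}(·|x)), and η̄_{Y|X} = max_x max_{j,j'} d_TV(q_j(·|x), q_{j'}(·|x)). -/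
open Finset

lemma convex_tv_bound {Z K : Type} [Fintype Z] [Fintype K]
    (f : K → Z → ℝ) (W W' : K → ℝ)
    (hW : ∀ k, 0 ≤ W k) (hW1 : ∑ k, W k = 1)
    (hW' : ∀ k, 0 ≤ W' k) (hW1' : ∑ k, W' k = 1)
    (B : ℝ) (hB : ∀ k k', (1/2) * ∑ z, |f k z - f k' z| ≤ B) :
    (1/2) * ∑ z, |(∑ k, W k * f k z) - ∑ k, W' k * f k z| ≤ B := by
  have key : ∀ z, (∑ k, W k * f k z) - ∑ k, W' k * f k z
      = ∑ k, ∑ k', W k * W' k' * (f k z - f k' z) := by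
    intro z
    have h1 : (∑ k, W k * f k z) = ∑ k, ∑ k', W k * W' k' * f k z := by
      refine Finset.sum_congr rfl fun k _ => ?_
      calc W k * f k z = (∑ k', W' k') * (W k * f k z) := by rw [hW1', one_mul]
        _ = ∑ k', W k * W' k' * f k z := by
            rw [Finset.sum_mul]; exact Finset.sum_congr rfl fun k' _ => by ring
    have h2 : (∑ k', W' k' * f k' z) = ∑ k, ∑ k', W k * W' k' * f k' z := by
      calc (∑ k', W' k' * f k' z) = ∑ k, W k * ∑ k', W' k' * f k' z := by
            rw [← Finset.sum_mul, hW1, one_mul]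
        _ = ∑ k, ∑ k', W k * W' k' * f k' z := by
            refine Finset.sum_congr rfl fun k _ => ?_
            rw [Finset.mul_sum]; exact Finset.sum_congr rfl fun k' _ => by ring
    rw [h1, h2, ← Finset.sum_sub_distrib]
    refine Finset.sum_congr rfl fun k _ => ?_
    rw [← Finset.sum_sub_distrib]
    exact Finset.sum_congr rfl fun k' _ => by ring
  calc (1/2) * ∑ z, |(∑ k, W k * f k z) - ∑ k, W' k * f k z|
      ≤ (1/2) * ∑ z, ∑ k, ∑ k', W k * W' k' * |f k z - f k' z| := by
        have h12 : (0:ℝ) ≤ 1/2 := by norm_num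
        refine mul_le_mul_of_nonneg_left (Finset.sum_le_sum fun z _ => ?_) h12
        rw [key z]
        calc |∑ k, ∑ k', W k * W' k' * (f k z - f k' z)|
            ≤ ∑ k, |∑ k', W k * W' k' * (f k z - f k' z)| := Finset.abs_sum_le_sum_abs _ _
          _ ≤ ∑ k, ∑ k', W k * W' k' * |f k z - f k' z| := by
              refine Finset.sum_le_sum fun k _ => ?_
              calc |∑ k', W k * W' k' * (f k z - f k' z)|
                  ≤ ∑ k', |W k * W' k' * (f k z - f k' z)| := Finset.abs_sum_le_sum_abs _ _
                _ = ∑ k', W k * W' k' * |f k z - f k' z| := by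
                    refine Finset.sum_congr rfl fun k' _ => ?_
                    rw [abs_mul, abs_of_nonneg (mul_nonneg (hW k) (hW' k'))]
    _ = ∑ k, ∑ k', W k * W' k' * ((1/2) * ∑ z, |f k z - f k' z|) := by
        rw [Finset.sum_comm, Finset.mul_sum]
        refine Finset.sum_congr rfl fun k _ => ?_
        rw [Finset.sum_comm, Finset.mul_sum]
        refine Finset.sum_congr rfl fun k' _ => ?_
        rw [← Finset.mul_sum]
        ring
    _ ≤ ∑ k, ∑ k', W k * W' k' * B := by
        refine Finset.sum_le_sum fun k _ => Finset.sum_le_sum fun k' _ => ?_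
        exact mul_le_mul_of_nonneg_left (hB k k') (mul_nonneg (hW k) (hW' k'))
    _ = B := by
        have hs : ∑ k, ∑ k', W k * W' k' = 1 := by
          simp only [← Finset.mul_sum, hW1', mul_one, hW1]
        calc ∑ k, ∑ k', W k * W' k' * B = (∑ k, ∑ k', W k * W' k') * B := by
              rw [Finset.sum_mul]
              exact Finset.sum_congr rfl fun k _ => by rw [Finset.sum_mul]
          _ = B := by rw [hs, one_mul]

lemma per_x_bound {Y : Type} [Fintype Y] (a b : ℝ) (ha : 0 ≤ a) (hb : 0 ≤ b)
    (u v : Y → ℝ) (hu0 : ∀ y, 0 ≤ u y) (hv0 : ∀ y, 0 ≤ v y)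
    (hu1 : ∑ y, u y = 1) (hv1 : ∑ y, v y = 1) :
    (1/2) * ∑ y, |a * u y - b * v y|
      ≤ min a b * ((1/2) * ∑ y, |u y - v y|) + (1/2) * |a - b| := by
  rcases le_total a b with h | h
  · have hy : ∀ y, |a * u y - b * v y| ≤ a * |u y - v y| + (b - a) * v y := by
      intro y
      have he : a * u y - b * v y = a * (u y - v y) + (a - b) * v y := by ring
      rw [he]
      calc |a * (u y - v y) + (a - b) * v y| ≤ |a * (u y - v y)| + |(a - b) * v y| := abs_add_le _ _
        _ = a * |u y - v y| + (b - a) * v y := by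
            rw [abs_mul, abs_mul, abs_of_nonneg ha, abs_of_nonneg (hv0 y),
              abs_of_nonpos (by linarith : a - b ≤ 0)]
            ring
    have hsum : ∑ y, |a * u y - b * v y| ≤ a * (∑ y, |u y - v y|) + (b - a) := by
      calc ∑ y, |a * u y - b * v y| ≤ ∑ y, (a * |u y - v y| + (b - a) * v y) :=
            Finset.sum_le_sum fun y _ => hy y
        _ = a * (∑ y, |u y - v y|) + (b - a) := by
            rw [Finset.sum_add_distrib, ← Finset.mul_sum, ← Finset.mul_sum, hv1, mul_one]
    rw [min_eq_left h, abs_of_nonpos (by linarith : a - b ≤ 0)]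
    nlinarith [hsum]
  · have hy : ∀ y, |a * u y - b * v y| ≤ b * |u y - v y| + (a - b) * u y := by
      intro y
      have he : a * u y - b * v y = b * (u y - v y) + (a - b) * u y := by ring
      rw [he]
      calc |b * (u y - v y) + (a - b) * u y| ≤ |b * (u y - v y)| + |(a - b) * u y| := abs_add_le _ _
        _ = b * |u y - v y| + (a - b) * u y := by
            rw [abs_mul, abs_mul, abs_of_nonneg hb, abs_of_nonneg (hu0 y),
              abs_of_nonneg (by linarith : (0:ℝ) ≤ a - b)]
    have hsum : ∑ y, |a * u y - b * v y| ≤ b * (∑ y, |u y - v y|) + (a - b) := by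
      calc ∑ y, |a * u y - b * v y| ≤ ∑ y, (b * |u y - v y| + (a - b) * u y) :=
            Finset.sum_le_sum fun y _ => hy y
        _ = b * (∑ y, |u y - v y|) + (a - b) := by
            rw [Finset.sum_add_distrib, ← Finset.mul_sum, ← Finset.mul_sum, hu1, mul_one]
    rw [min_eq_right h, abs_of_nonneg (by linarith : (0:ℝ) ≤ a - b)]
    nlinarith [hsum]

/-- Diameter upper bound: diam_TV(P) ≤ η_X + min(η*_{Y|X}, (1 − η_X)·η̄_{Y|X}). -/
theorem diameter_upper_bound
    {X Y I J : Type} [Fintype X] [Fintype Y] [Fintype I] [Fintype J]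
    [Nonempty I] [Nonempty J]
    (p : I → X → ℝ) (q : J → X → Y → ℝ)
    (hp0 : ∀ i x, 0 ≤ p i x) (hp1 : ∀ i, ∑ x, p i x = 1)
    (hq0 : ∀ j x y, 0 ≤ q j x y) (hq1 : ∀ j x, ∑ y, q j x y = 1) :
    let P : I → J → X × Y → ℝ := fun i j z => p i z.1 * q j z.1 z.2
    let C : Set (X × Y → ℝ) :=
      {μ | ∃ w : I → J → ℝ, (∀ i j, 0 ≤ w i j) ∧ (∑ i, ∑ j, w i j = 1) ∧
            μ = fun z => ∑ i, ∑ j, w i j * P i j z}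
    let ηX : ℝ := ⨆ i, ⨆ i', (1/2) * ∑ x, |p i x - p i' x|
    let ηstar : ℝ := ⨆ i, ⨆ j, ⨆ j', ∑ x, p i x * ((1/2) * ∑ y, |q j x y - q j' x y|)
    let ηbar : ℝ := ⨆ x, ⨆ j, ⨆ j', (1/2) * ∑ y, |q j x y - q j' x y|
    sSup {d | ∃ μ ∈ C, ∃ ν ∈ C, (1/2) * ∑ z, |μ z - ν z| = d}
      ≤ ηX + min ηstar ((1 - ηX) * ηbar) := by
  intro P C ηX ηstar ηbar
  have hηX_def : ηX = ⨆ i, ⨆ i', (1/2) * ∑ x, |p i x - p i' x| := rfl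
  have hηstar_def : ηstar = ⨆ i, ⨆ j, ⨆ j',
      ∑ x, p i x * ((1/2) * ∑ y, |q j x y - q j' x y|) := rfl
  have hηbar_def : ηbar = ⨆ x, ⨆ j, ⨆ j', (1/2) * ∑ y, |q j x y - q j' x y| := rfl
  set dpp : I → I → ℝ := fun i i' => (1/2) * ∑ x, |p i x - p i' x| with hdpp_def
  set dq : J → J → X → ℝ := fun j j' x => (1/2) * ∑ y, |q j x y - q j' x y| with hdq_def
  have hdpp0 : ∀ i i', 0 ≤ dpp i i' := fun i i' =>
    mul_nonneg (by norm_num) (Finset.sum_nonneg fun x _ => abs_nonneg _)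
  have hdq0 : ∀ j j' x, 0 ≤ dq j j' x := fun j j' x =>
    mul_nonneg (by norm_num) (Finset.sum_nonneg fun y _ => abs_nonneg _)
  have hdpp1 : ∀ i i', dpp i i' ≤ 1 := by
    intro i i'
    have : ∑ x, |p i x - p i' x| ≤ 2 := by
      calc ∑ x, |p i x - p i' x| ≤ ∑ x, (p i x + p i' x) := by
            refine Finset.sum_le_sum fun x _ => ?_
            calc |p i x - p i' x| ≤ |p i x| + |p i' x| := abs_sub _ _
              _ = p i x + p i' x := by
                  rw [abs_of_nonneg (hp0 i x), abs_of_nonneg (hp0 i' x)]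
        _ = 2 := by rw [Finset.sum_add_distrib, hp1, hp1]; norm_num
    simp only [hdpp_def]; linarith
  have hdq1 : ∀ j j' x, dq j j' x ≤ 1 := by
    intro j j' x
    have : ∑ y, |q j x y - q j' x y| ≤ 2 := by
      calc ∑ y, |q j x y - q j' x y| ≤ ∑ y, (q j x y + q j' x y) := by
            refine Finset.sum_le_sum fun y _ => ?_
            calc |q j x y - q j' x y| ≤ |q j x y| + |q j' x y| := abs_sub _ _
              _ = q j x y + q j' x y := by
                  rw [abs_of_nonneg (hq0 j x y), abs_of_nonneg (hq0 j' x y)]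
        _ = 2 := by rw [Finset.sum_add_distrib, hq1, hq1]; norm_num
    simp only [hdq_def]; linarith
  -- sup facts
  have hdpp_le : ∀ i i', dpp i i' ≤ ηX := by
    intro i i'
    rw [hηX_def]
    exact le_trans
      (le_ciSup (f := fun i'' => (1/2) * ∑ x, |p i x - p i'' x|)
        (Set.Finite.bddAbove (Set.finite_range _)) i')
      (le_ciSup (f := fun i0 => ⨆ i', (1/2) * ∑ x, |p i0 x - p i' x|)
        (Set.Finite.bddAbove (Set.finite_range _)) i)
  have hstar_le : ∀ i j j', (∑ x, p i x * dq j j' x) ≤ ηstar := by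
    intro i j j'
    rw [hηstar_def]
    refine le_trans (le_trans
      (le_ciSup (f := fun j'' => ∑ x, p i x * ((1/2) * ∑ y, |q j x y - q j'' x y|))
        (Set.Finite.bddAbove (Set.finite_range _)) j')
      (le_ciSup (f := fun j₀ => ⨆ j'', ∑ x, p i x * ((1/2) * ∑ y, |q j₀ x y - q j'' x y|))
        (Set.Finite.bddAbove (Set.finite_range _)) j))
      (le_ciSup (f := fun i0 => ⨆ j₀, ⨆ j'', ∑ x, p i0 x * ((1/2) * ∑ y, |q j₀ x y - q j'' x y|))
        (Set.Finite.bddAbove (Set.finite_range _)) i)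
  have hbar_le : ∀ x j j', dq j j' x ≤ ηbar := by
    intro x j j'
    rw [hηbar_def]
    refine le_trans (le_trans
      (le_ciSup (f := fun j'' => (1/2) * ∑ y, |q j x y - q j'' x y|)
        (Set.Finite.bddAbove (Set.finite_range _)) j')
      (le_ciSup (f := fun j₀ => ⨆ j'', (1/2) * ∑ y, |q j₀ x y - q j'' x y|)
        (Set.Finite.bddAbove (Set.finite_range _)) j))
      (le_ciSup (f := fun x0 => ⨆ j₀, ⨆ j'', (1/2) * ∑ y, |q j₀ x0 y - q j'' x0 y|)
        (Set.Finite.bddAbove (Set.finite_range _)) x)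
  have hηX0 : 0 ≤ ηX := by
    rw [hηX_def]
    exact Real.iSup_nonneg fun i => Real.iSup_nonneg fun i' => hdpp0 i i'
  have hηX1 : ηX ≤ 1 := by
    rw [hηX_def]
    exact Real.iSup_le (fun i => Real.iSup_le (fun i' => hdpp1 i i') zero_le_one) zero_le_one
  have hηbar0 : 0 ≤ ηbar := by
    rw [hηbar_def]
    exact Real.iSup_nonneg fun x => Real.iSup_nonneg fun j => Real.iSup_nonneg fun j' =>
      hdq0 j j' x
  have hηbar1 : ηbar ≤ 1 := by
    rw [hηbar_def]
    exact Real.iSup_le (fun x => Real.iSup_le (fun j => Real.iSup_le (fun j' =>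
      hdq1 j j' x) zero_le_one) zero_le_one) zero_le_one
  have hηstar0 : 0 ≤ ηstar := by
    rw [hηstar_def]
    exact Real.iSup_nonneg fun i => Real.iSup_nonneg fun j => Real.iSup_nonneg fun j' =>
      Finset.sum_nonneg fun x _ => mul_nonneg (hp0 i x) (hdq0 j j' x)
  have hB0 : 0 ≤ ηX + min ηstar ((1 - ηX) * ηbar) :=
    add_nonneg hηX0 (le_min hηstar0 (mul_nonneg (by linarith) hηbar0))
  -- pairwise bound
  have hpair : ∀ i j i' j', (1/2) * ∑ z, |P i j z - P i' j' z|
      ≤ ηX + min ηstar ((1 - ηX) * ηbar) := by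
    intro i j i' j'
    have hrw : (1/2) * ∑ z : X × Y, |P i j z - P i' j' z|
        = ∑ x, (1/2) * ∑ y, |p i x * q j x y - p i' x * q j' x y| := by
      rw [Fintype.sum_prod_type, Finset.mul_sum]
    have hD : (1/2) * ∑ z : X × Y, |P i j z - P i' j' z|
        ≤ (∑ x, min (p i x) (p i' x) * dq j j' x) + dpp i i' := by
      rw [hrw]
      calc ∑ x, (1/2) * ∑ y, |p i x * q j x y - p i' x * q j' x y|
          ≤ ∑ x, (min (p i x) (p i' x) * dq j j' x + (1/2) * |p i x - p i' x|) := by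
            refine Finset.sum_le_sum fun x _ => ?_
            exact per_x_bound (p i x) (p i' x) (hp0 i x) (hp0 i' x)
              (q j x) (q j' x) (hq0 j x) (hq0 j' x) (hq1 j x) (hq1 j' x)
        _ = (∑ x, min (p i x) (p i' x) * dq j j' x) + dpp i i' := by
            rw [Finset.sum_add_distrib, hdpp_def, ← Finset.mul_sum]
    have hmin_sum : ∑ x, min (p i x) (p i' x) = 1 - dpp i i' := by
      have hm : ∀ x, min (p i x) (p i' x)
          = (p i x + p i' x - |p i x - p i' x|) / 2 := by
        intro x
        rcases le_total (p i x) (p i' x) with h | h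
        · rw [min_eq_left h, abs_of_nonpos (by linarith : p i x - p i' x ≤ 0)]; ring
        · rw [min_eq_right h, abs_of_nonneg (by linarith : (0:ℝ) ≤ p i x - p i' x)]; ring
      rw [Finset.sum_congr rfl fun x _ => hm x]
      simp only [hdpp_def]
      rw [← Finset.sum_div, Finset.sum_sub_distrib, Finset.sum_add_distrib, hp1, hp1]
      ring
    have hb1 : (∑ x, min (p i x) (p i' x) * dq j j' x) ≤ ηstar := by
      refine le_trans ?_ (hstar_le i' j j')
      exact Finset.sum_le_sum fun x _ =>
        mul_le_mul_of_nonneg_right (min_le_right _ _) (hdq0 j j' x)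
    have hb2 : (∑ x, min (p i x) (p i' x) * dq j j' x) ≤ (1 - dpp i i') * ηbar := by
      calc (∑ x, min (p i x) (p i' x) * dq j j' x)
          ≤ ∑ x, min (p i x) (p i' x) * ηbar := by
            refine Finset.sum_le_sum fun x _ => ?_
            exact mul_le_mul_of_nonneg_left (hbar_le x j j')
              (le_min (hp0 i x) (hp0 i' x))
        _ = (1 - dpp i i') * ηbar := by rw [← Finset.sum_mul, hmin_sum]
    have hd := hdpp_le i i'
    rcases le_total ηstar ((1 - ηX) * ηbar) with h | h
    · rw [min_eq_left h]; linarith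
    · rw [min_eq_right h]
      nlinarith [mul_nonneg (sub_nonneg.mpr hd) (sub_nonneg.mpr hηbar1)]
  -- main argument
  refine Real.sSup_le ?_ hB0
  rintro d ⟨μ, ⟨w, hw0, hw1, hμ⟩, ν, ⟨w', hw'0, hw'1, hν⟩, hdd⟩
  subst hμ hν hdd
  set W : I × J → ℝ := fun k => w k.1 k.2 with hW_def
  set W' : I × J → ℝ := fun k => w' k.1 k.2 with hW'_def
  set f : I × J → X × Y → ℝ := fun k => P k.1 k.2 with hf_def
  have hμz : ∀ z, (∑ i, ∑ j, w i j * P i j z) = ∑ k : I × J, W k * f k z := by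
    intro z; rw [Fintype.sum_prod_type]
  have hνz : ∀ z, (∑ i, ∑ j, w' i j * P i j z) = ∑ k : I × J, W' k * f k z := by
    intro z; rw [Fintype.sum_prod_type]
  simp only []
  calc (1/2) * ∑ z, |(∑ i, ∑ j, w i j * P i j z) - ∑ i, ∑ j, w' i j * P i j z|
      = (1/2) * ∑ z, |(∑ k : I × J, W k * f k z) - ∑ k : I × J, W' k * f k z| := by
        refine congrArg _ (Finset.sum_congr rfl fun z _ => ?_)
        rw [hμz z, hνz z]
    _ ≤ ηX + min ηstar ((1 - ηX) * ηbar) := by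
        refine convex_tv_bound f W W' (fun k => hw0 k.1 k.2) ?_ (fun k => hw'0 k.1 k.2) ?_ _
          (fun k k' => hpair k.1 k.2 k'.1 k'.2)
        · rw [Fintype.sum_prod_type]; exact hw1
        · rw [Fintype.sum_prod_type]; exact hw'1
end
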